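/- Fix α ∈ (0,1/2). For every h₀ ∈ Ḣ^{1/2} one has K₀(t) → 0 as t → 0. Moreover, for each β ∈ [1/2, 1+α] there is a constant c_β > 0 such that K₀(t) ≤ c_β t^{(2β−1)/8} |h₀|_β for all h₀ ∈ Ḣ^β and all t > 0. -/

import Mathlib

open MeasureTheory Filter Topology Set
open scoped ENNReal
noncomputable section

/-- `k`-th Fourier coefficient of an `L`-periodic function `f : ℝ → ℝ`. -/
def fCoeff (L : ℝ) (f : ℝ → ℝ) (k : ℤ) : ℂ :=
  (1 / (L : ℂ)) * ∫ x in (0:ℝ)..L,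
    (f x : ℂ) * Complex.exp (-2 * (Real.pi : ℂ) * Complex.I * (k : ℂ) * (x : ℂ) / (L : ℂ))

/-- Membership in the homogeneous Sobolev space `Ḣ^α` of real-valued, `L`-periodic,
zero-mean functions, described through the sequence of Fourier coefficients. -/
structure InHdot (α : ℝ) (u : ℤ → ℂ) : Prop where
  zero : u 0 = 0
  conjSymm : ∀ k : ℤ, u (-k) = starRingEnd ℂ (u k)
  summable : Summable fun k : ℤ => |(k : ℝ)| ^ (2 * α) * ‖u k‖ ^ 2

/-- The homogeneous Sobolev norm `|u|_α = (∑_{k≠0} |k|^{2α}|u_k|²)^{1/2}`. -/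
def Hnorm (α : ℝ) (u : ℤ → ℂ) : ℝ :=
  Real.sqrt (∑' k : ℤ, |(k : ℝ)| ^ (2 * α) * ‖u k‖ ^ 2)

/-- The constant `c = (2π/L)^4` appearing in the semigroup `e^{-tA}`, `A = ∂_x^4`. -/
def csg (L : ℝ) : ℝ := (2 * Real.pi / L) ^ 4

/-- The analytic semigroup `e^{-tA}`, acting diagonally on Fourier coefficients. -/
def heatSG (L t : ℝ) (u : ℤ → ℂ) : ℤ → ℂ :=
  fun k => Real.exp (-(csg L) * t * (k : ℝ) ^ 4) • u k

/-- Fourier coefficients of the nonlinearity `∂_x^2((∂_x h)^2)`. -/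
def nonlin (L : ℝ) (u : ℤ → ℂ) : ℤ → ℂ :=
  fun k => (csg L * (k : ℝ) ^ 2) • ∑' l : ℤ, ((l : ℂ) * ((k - l : ℤ) : ℂ)) * u l * u (k - l)

/-- The mild solution map
`F(h)(t) = e^{-tA}h₀ - ∫₀ᵗ e^{-(t-s)A} ∂_x^2((∂_x h(s))^2) ds`. -/
def mildMap (L : ℝ) (h0 : ℤ → ℂ) (h : ℝ → ℤ → ℂ) (t : ℝ) : ℤ → ℂ :=
  fun k => heatSG L t h0 k -
    ∫ s in (0:ℝ)..t, Real.exp (-(csg L) * (t - s) * (k : ℝ) ^ 4) • nonlin L (h s) k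

/-- The weight `s^{(2α+1)/8}|u|_{1+α}`. -/
def wnorm (α s : ℝ) (u : ℤ → ℂ) : ℝ := s ^ ((2 * α + 1) / 8) * Hnorm (1 + α) u

/-- `Kfun α h t = sup_{s ∈ (0,t]} s^{(2α+1)/8}|h(s)|_{1+α}`; in particular
`K₀(t) = Kfun α (fun s => heatSG L s h₀) t` and `‖h‖_{α,T} = Kfun α h T`. -/
def Kfun (α : ℝ) (h : ℝ → ℤ → ℂ) (t : ℝ) : ℝ :=
  sSup ((fun s => wnorm α s (h s)) '' Set.Ioc 0 t)

/-- The space `S_α(T)`: continuity `(0,T] → Ḣ^{1+α}` together with finiteness of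
the weighted sup-norm `‖·‖_{α,T}`. -/
def MemS (α T : ℝ) (h : ℝ → ℤ → ℂ) : Prop :=
  (∀ t ∈ Set.Ioc (0:ℝ) T, InHdot (1 + α) (h t)) ∧
  (∀ t ∈ Set.Ioc (0:ℝ) T, ∀ ε > 0, ∃ δ > 0, ∀ s ∈ Set.Ioc (0:ℝ) T,
      |s - t| < δ → Hnorm (1 + α) (h s - h t) < ε) ∧
  BddAbove ((fun s => wnorm α s (h s)) '' Set.Ioc 0 T)

private lemma rpow_mul_exp_le (a y : ℝ) (ha0 : 0 ≤ a) (ha1 : a ≤ 1) (hy : 0 ≤ y) :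
    y ^ a * Real.exp (-(2 * y)) ≤ 1 := by
  have h1 : y ^ a ≤ Real.exp y := by
    rcases le_total y 1 with h | h
    · calc y ^ a ≤ 1 ^ a := Real.rpow_le_rpow hy h ha0
        _ = 1 := Real.one_rpow a
        _ ≤ Real.exp y := Real.one_le_exp hy
    · calc y ^ a ≤ y ^ (1:ℝ) :=
          Real.rpow_le_rpow_of_exponent_le h ha1
        _ = y := Real.rpow_one y
        _ ≤ Real.exp y := (Real.add_one_le_exp y).trans' (by linarith)
  calc y ^ a * Real.exp (-(2 * y)) ≤ Real.exp y * Real.exp (-(2 * y)) :=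
        mul_le_mul_of_nonneg_right h1 (Real.exp_nonneg _)
    _ = Real.exp (-y) := by rw [← Real.exp_add]; ring_nf
    _ ≤ 1 := Real.exp_le_one_iff.2 (by linarith)

private lemma key_pt (c s β γ : ℝ) (hc : 0 < c) (hs : 0 < s)
    (hβ : 0 < β) (hγ0 : 0 ≤ γ) (hγ2 : γ ≤ 2) (k : ℤ) :
    |(k:ℝ)| ^ (2*(β+γ)) * Real.exp (-(2 * (c * s * (k:ℝ)^4)))
      ≤ (c*s) ^ (-(γ/2)) * |(k:ℝ)| ^ (2*β) := by
  rcases eq_or_ne k 0 with rfl | hk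
  · simp only [Int.cast_zero, abs_zero]
    rw [Real.zero_rpow (by positivity), zero_mul]
    positivity
  · have hk0 : (0:ℝ) < |(k:ℝ)| := by
      have : (k:ℝ) ≠ 0 := Int.cast_ne_zero.2 hk
      positivity
    have hk4 : (0:ℝ) < (k:ℝ)^4 := by
      have : (k:ℝ) ≠ 0 := Int.cast_ne_zero.2 hk
      positivity
    set y : ℝ := c * s * (k:ℝ)^4 with hy
    have hy0 : 0 < y := by positivity
    have hcs : (0:ℝ) < c * s := by positivity
    have h1 : |(k:ℝ)| ^ (2*(β+γ)) = |(k:ℝ)| ^ (2*β) * |(k:ℝ)| ^ (2*γ) := by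
      rw [← Real.rpow_add hk0]; ring_nf
    have h2 : |(k:ℝ)| ^ (2*γ) = ((k:ℝ)^4) ^ (γ/2) := by
      have h4 : (k:ℝ)^4 = |(k:ℝ)| ^ (4:ℕ) := by
        rw [← abs_pow]; exact (abs_of_nonneg hk4.le).symm
      rw [h4, ← Real.rpow_natCast |(k:ℝ)| 4, ← Real.rpow_mul hk0.le]
      congr 1; push_cast; ring
    have h3 : ((k:ℝ)^4) ^ (γ/2) = y ^ (γ/2) / (c*s) ^ (γ/2) := by
      rw [← Real.div_rpow hy0.le hcs.le]
      congr 1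
      field_simp [hy]
      rw [hy]; ring
    have hkey : y ^ (γ/2) * Real.exp (-(2*y)) ≤ 1 :=
      rpow_mul_exp_le (γ/2) y (by linarith) (by linarith) hy0.le
    have hr : (c*s) ^ (-(γ/2)) = ((c*s) ^ (γ/2))⁻¹ := by
      rw [Real.rpow_neg hcs.le]
    rw [h1, h2, h3, hr]
    have hpos : (0:ℝ) ≤ |(k:ℝ)| ^ (2*β) * ((c*s) ^ (γ/2))⁻¹ := by positivity
    calc |(k:ℝ)| ^ (2*β) * (y ^ (γ/2) / (c*s) ^ (γ/2)) * Real.exp (-(2*y))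
        = (|(k:ℝ)| ^ (2*β) * ((c*s) ^ (γ/2))⁻¹) * (y ^ (γ/2) * Real.exp (-(2*y))) := by ring
      _ ≤ (|(k:ℝ)| ^ (2*β) * ((c*s) ^ (γ/2))⁻¹) * 1 :=
          mul_le_mul_of_nonneg_left hkey hpos
      _ = ((c*s) ^ (γ/2))⁻¹ * |(k:ℝ)| ^ (2*β) := by ring

private lemma csg_pos (L : ℝ) (hL : 0 < L) : 0 < csg L := by
  have := Real.pi_pos
  unfold csg; positivity

private lemma heat_term_le (L : ℝ) (hL : 0 < L) (α β : ℝ) (hβ : 0 < β)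
    (hγ0 : 0 ≤ 1 + α - β) (hγ2 : 1 + α - β ≤ 2) (h0 : ℤ → ℂ) (s : ℝ) (hs : 0 < s) (k : ℤ) :
    |(k:ℝ)| ^ (2*(1+α)) * ‖heatSG L s h0 k‖ ^ 2
      ≤ (csg L * s) ^ (-((1+α-β)/2)) * (|(k:ℝ)| ^ (2*β) * ‖h0 k‖ ^ 2) := by
  have hc := csg_pos L hL
  have hnorm : ‖heatSG L s h0 k‖ ^ 2
      = Real.exp (-(2 * (csg L * s * (k:ℝ)^4))) * ‖h0 k‖ ^ 2 := by
    simp only [heatSG, norm_smul, Real.norm_eq_abs, Real.abs_exp]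
    rw [mul_pow, sq (Real.exp _), ← Real.exp_add]
    congr 2
    ring
  rw [hnorm]
  have hkey := key_pt (csg L) s β (1+α-β) hc hs hβ hγ0 hγ2 k
  have he : 2*(β+(1+α-β)) = 2*(1+α) := by ring
  rw [he] at hkey
  calc |(k:ℝ)| ^ (2*(1+α)) * (Real.exp (-(2 * (csg L * s * (k:ℝ)^4))) * ‖h0 k‖ ^ 2)
      = (|(k:ℝ)| ^ (2*(1+α)) * Real.exp (-(2 * (csg L * s * (k:ℝ)^4)))) * ‖h0 k‖ ^ 2 := by ring
    _ ≤ ((csg L * s) ^ (-((1+α-β)/2)) * |(k:ℝ)| ^ (2*β)) * ‖h0 k‖ ^ 2 :=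
        mul_le_mul_of_nonneg_right hkey (by positivity)
    _ = _ := by ring

private lemma hnorm_heat_le (L : ℝ) (hL : 0 < L) (α β : ℝ) (hβ : 0 < β)
    (hγ0 : 0 ≤ 1 + α - β) (hγ2 : 1 + α - β ≤ 2) (h0 : ℤ → ℂ)
    (hsum : Summable fun k : ℤ => |(k:ℝ)| ^ (2*β) * ‖h0 k‖ ^ 2)
    (s : ℝ) (hs : 0 < s) :
    Hnorm (1+α) (heatSG L s h0)
      ≤ (csg L * s) ^ (-((1+α-β)/4)) * Hnorm β h0 := by
  have hc := csg_pos L hL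
  have hcs : 0 < csg L * s := by positivity
  have hg : Summable fun k : ℤ =>
      (csg L * s) ^ (-((1+α-β)/2)) * (|(k:ℝ)| ^ (2*β) * ‖h0 k‖ ^ 2) := hsum.mul_left _
  have hle : ∀ k : ℤ, |(k:ℝ)| ^ (2*(1+α)) * ‖heatSG L s h0 k‖ ^ 2
      ≤ (csg L * s) ^ (-((1+α-β)/2)) * (|(k:ℝ)| ^ (2*β) * ‖h0 k‖ ^ 2) :=
    heat_term_le L hL α β hβ hγ0 hγ2 h0 s hs
  have hf : Summable fun k : ℤ => |(k:ℝ)| ^ (2*(1+α)) * ‖heatSG L s h0 k‖ ^ 2 :=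
    Summable.of_nonneg_of_le (fun k => by positivity) hle hg
  have hts : (∑' k : ℤ, |(k:ℝ)| ^ (2*(1+α)) * ‖heatSG L s h0 k‖ ^ 2)
      ≤ (csg L * s) ^ (-((1+α-β)/2)) * ∑' k : ℤ, |(k:ℝ)| ^ (2*β) * ‖h0 k‖ ^ 2 := by
    rw [← tsum_mul_left]
    exact Summable.tsum_le_tsum hle hf hg
  have hsq : Real.sqrt ((csg L * s) ^ (-((1+α-β)/2))) = (csg L * s) ^ (-((1+α-β)/4)) := by
    rw [Real.sqrt_eq_rpow, ← Real.rpow_mul hcs.le]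
    congr 1; ring
  unfold Hnorm
  calc Real.sqrt (∑' k : ℤ, |(k:ℝ)| ^ (2*(1+α)) * ‖heatSG L s h0 k‖ ^ 2)
      ≤ Real.sqrt ((csg L * s) ^ (-((1+α-β)/2)) *
          ∑' k : ℤ, |(k:ℝ)| ^ (2*β) * ‖h0 k‖ ^ 2) := Real.sqrt_le_sqrt hts
    _ = (csg L * s) ^ (-((1+α-β)/4)) *
          Real.sqrt (∑' k : ℤ, |(k:ℝ)| ^ (2*β) * ‖h0 k‖ ^ 2) := by
        rw [Real.sqrt_mul (by positivity), hsq]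

private lemma wnorm_heat_le (L : ℝ) (hL : 0 < L) (α β : ℝ) (hβ : 0 < β)
    (hγ0 : 0 ≤ 1 + α - β) (hγ2 : 1 + α - β ≤ 2) (h0 : ℤ → ℂ)
    (hsum : Summable fun k : ℤ => |(k:ℝ)| ^ (2*β) * ‖h0 k‖ ^ 2)
    (s : ℝ) (hs : 0 < s) :
    wnorm α s (heatSG L s h0)
      ≤ (csg L) ^ (-((1+α-β)/4)) * s ^ ((2*β-1)/8) * Hnorm β h0 := by
  have hc := csg_pos L hL
  have h1 := hnorm_heat_le L hL α β hβ hγ0 hγ2 h0 hsum s hs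
  have hexp : (2*α+1)/8 + (-((1+α-β)/4)) = (2*β-1)/8 := by ring
  have hH : 0 ≤ Hnorm β h0 := Real.sqrt_nonneg _
  calc wnorm α s (heatSG L s h0)
      = s ^ ((2*α+1)/8) * Hnorm (1+α) (heatSG L s h0) := rfl
    _ ≤ s ^ ((2*α+1)/8) * ((csg L * s) ^ (-((1+α-β)/4)) * Hnorm β h0) :=
        mul_le_mul_of_nonneg_left h1 (by positivity)
    _ = (csg L) ^ (-((1+α-β)/4)) * (s ^ ((2*α+1)/8) * s ^ (-((1+α-β)/4))) * Hnorm β h0 := by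
        rw [Real.mul_rpow hc.le hs.le]; ring
    _ = (csg L) ^ (-((1+α-β)/4)) * s ^ ((2*β-1)/8) * Hnorm β h0 := by
        rw [← Real.rpow_add hs, hexp]

private lemma wnorm_heat_tendsto (L : ℝ) (hL : 0 < L) (α : ℝ)
    (hα0 : 0 < α) (hα2 : α < 1/2) (h0 : ℤ → ℂ)
    (hsum : Summable fun k : ℤ => |(k:ℝ)| ^ (2*(1/2:ℝ)) * ‖h0 k‖ ^ 2) :
    Tendsto (fun s => wnorm α s (heatSG L s h0)) (𝓝[>] (0:ℝ)) (𝓝 0) := by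
  have hc := csg_pos L hL
  set F : ℝ → ℤ → ℝ := fun s k =>
    s ^ ((2*α+1)/4) * (|(k:ℝ)| ^ (2*(1+α)) * ‖heatSG L s h0 k‖ ^ 2) with hF
  have hrw : ∀ s ∈ Set.Ioi (0:ℝ), wnorm α s (heatSG L s h0) = Real.sqrt (∑' k, F s k) := by
    intro s hs
    have hs' : (0:ℝ) < s := hs
    have hT : (∑' k, F s k)
        = s ^ ((2*α+1)/4) * ∑' k : ℤ, |(k:ℝ)| ^ (2*(1+α)) * ‖heatSG L s h0 k‖ ^ 2 :=
      tsum_mul_left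
    have h8 : Real.sqrt (s ^ ((2*α+1)/4)) = s ^ ((2*α+1)/8) := by
      rw [Real.sqrt_eq_rpow, ← Real.rpow_mul hs'.le]
      congr 1; ring
    rw [hT, Real.sqrt_mul (Real.rpow_nonneg hs'.le _), h8]
    rfl
  have hpt : ∀ k : ℤ, Tendsto (fun s => F s k) (𝓝[>] (0:ℝ)) (𝓝 0) := by
    intro k
    have h1 : Tendsto (fun s : ℝ => s ^ ((2*α+1)/4)) (𝓝[>] (0:ℝ)) (𝓝 0) := by
      have hcont := (Real.continuousAt_rpow_const 0 ((2*α+1)/4)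
        (Or.inr (by linarith))).tendsto
      rw [Real.zero_rpow (by positivity)] at hcont
      exact hcont.mono_left nhdsWithin_le_nhds
    have h2 : Tendsto (fun s : ℝ => s ^ ((2*α+1)/4) * (|(k:ℝ)| ^ (2*(1+α)) * ‖h0 k‖ ^ 2))
        (𝓝[>] (0:ℝ)) (𝓝 0) := by
      have := h1.mul_const (|(k:ℝ)| ^ (2*(1+α)) * ‖h0 k‖ ^ 2)
      rwa [zero_mul] at this
    apply squeeze_zero' ?_ ?_ h2
    · filter_upwards [self_mem_nhdsWithin] with s hs
      have hs' : (0:ℝ) < s := hs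
      positivity
    · filter_upwards [self_mem_nhdsWithin] with s hs
      have hs' : (0:ℝ) < s := hs
      apply mul_le_mul_of_nonneg_left _ (Real.rpow_nonneg hs'.le _)
      apply mul_le_mul_of_nonneg_left _ (Real.rpow_nonneg (abs_nonneg _) _)
      have hle : ‖heatSG L s h0 k‖ ≤ ‖h0 k‖ := by
        rw [heatSG, norm_smul, Real.norm_eq_abs, Real.abs_exp]
        calc Real.exp (-(csg L) * s * (k:ℝ)^4) * ‖h0 k‖ ≤ 1 * ‖h0 k‖ := by
              apply mul_le_mul_of_nonneg_right _ (norm_nonneg _)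
              rw [Real.exp_le_one_iff]
              have hk4 : (0:ℝ) ≤ (k:ℝ)^4 := by positivity
              nlinarith [mul_nonneg (mul_nonneg hc.le hs'.le) hk4]
          _ = ‖h0 k‖ := one_mul _
      exact pow_le_pow_left₀ (norm_nonneg _) hle 2
  have hbd : ∀ᶠ s in 𝓝[>] (0:ℝ), ∀ k : ℤ,
      ‖F s k‖ ≤ (csg L) ^ (-((1+α-(1/2:ℝ))/2)) * (|(k:ℝ)| ^ (2*(1/2:ℝ)) * ‖h0 k‖ ^ 2) := by
    filter_upwards [self_mem_nhdsWithin] with s hs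
    intro k
    have hs' : (0:ℝ) < s := hs
    have hFn : (0:ℝ) ≤ F s k := by
      apply mul_nonneg (Real.rpow_nonneg hs'.le _)
      positivity
    rw [Real.norm_eq_abs, abs_of_nonneg hFn]
    calc F s k ≤ s ^ ((2*α+1)/4) *
          ((csg L * s) ^ (-((1+α-(1/2:ℝ))/2)) * (|(k:ℝ)| ^ (2*(1/2:ℝ)) * ‖h0 k‖ ^ 2)) :=
          mul_le_mul_of_nonneg_left
            (heat_term_le L hL α (1/2) (by norm_num) (by linarith) (by linarith) h0 s hs' k)
            (Real.rpow_nonneg hs'.le _)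
      _ = (csg L) ^ (-((1+α-(1/2:ℝ))/2)) * (s ^ ((2*α+1)/4) * s ^ (-((1+α-(1/2:ℝ))/2))) *
            (|(k:ℝ)| ^ (2*(1/2:ℝ)) * ‖h0 k‖ ^ 2) := by
          rw [Real.mul_rpow hc.le hs'.le]; ring
      _ = (csg L) ^ (-((1+α-(1/2:ℝ))/2)) * (|(k:ℝ)| ^ (2*(1/2:ℝ)) * ‖h0 k‖ ^ 2) := by
          rw [← Real.rpow_add hs',
            show (2*α+1)/4 + -((1+α-(1/2:ℝ))/2) = 0 by ring, Real.rpow_zero, mul_one]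
  have htsum : Tendsto (fun s => ∑' k, F s k) (𝓝[>] (0:ℝ)) (𝓝 0) := by
    have := tendsto_tsum_of_dominated_convergence (g := fun _ : ℤ => (0:ℝ))
      (hsum.mul_left ((csg L) ^ (-((1+α-(1/2:ℝ))/2)))) hpt hbd
    rwa [tsum_zero] at this
  have hsqrt : Tendsto (fun s => Real.sqrt (∑' k, F s k)) (𝓝[>] (0:ℝ)) (𝓝 0) := by
    have := (Real.continuous_sqrt.tendsto 0).comp htsum
    rwa [Real.sqrt_zero] at this
  exact hsqrt.congr' (eventually_of_mem self_mem_nhdsWithin fun s hs => (hrw s hs).symm)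

/-- For `h₀ ∈ Ḣ^{1/2}`, `K₀(t) → 0` as `t → 0`; moreover for each
`β ∈ [1/2, 1+α]` there is `c_β > 0` with `K₀(t) ≤ c_β t^{(2β-1)/8}|h₀|_β`. -/
theorem surfaceGrowth_K0_estimates (L : ℝ) (hL : 0 < L)
    (α : ℝ) (hα : α ∈ Set.Ioo (0:ℝ) (1/2)) :
    (∀ h0 : ℤ → ℂ, InHdot (1/2) h0 →
      Tendsto (fun t => Kfun α (fun s => heatSG L s h0) t)
        (nhdsWithin 0 (Set.Ioi 0)) (nhds 0)) ∧
    (∀ β ∈ Set.Icc (1/2 : ℝ) (1 + α), ∃ c > 0, ∀ h0 : ℤ → ℂ, InHdot β h0 →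
      ∀ t > (0:ℝ), Kfun α (fun s => heatSG L s h0) t ≤ c * t ^ ((2 * β - 1) / 8) * Hnorm β h0) := by
  obtain ⟨hα0, hα2⟩ := hα
  constructor
  · intro h0 hIn
    have htend := wnorm_heat_tendsto L hL α hα0 hα2 h0 hIn.summable
    rw [Metric.tendsto_nhdsWithin_nhds] at htend ⊢
    intro ε hε
    obtain ⟨δ, hδ0, hδ⟩ := htend (ε/2) (by linarith)
    refine ⟨δ, hδ0, ?_⟩
    intro t ht hdist
    have ht' : (0:ℝ) < t := ht
    have htδ : t < δ := by
      rwa [Real.dist_eq, sub_zero, abs_of_pos ht'] at hdist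
    have hbound : ∀ x ∈ (fun s => wnorm α s (heatSG L s h0)) '' Set.Ioc 0 t, x ≤ ε/2 := by
      rintro x ⟨s, hs, rfl⟩
      have hs0 : (0:ℝ) < s := hs.1
      have hsδ : dist s 0 < δ := by
        rw [Real.dist_eq, sub_zero, abs_of_pos hs0]
        exact lt_of_le_of_lt hs.2 htδ
      have h := hδ (Set.mem_Ioi.2 hs0) hsδ
      rw [Real.dist_eq, sub_zero] at h
      exact (le_abs_self _).trans h.le
    have hK : Kfun α (fun s => heatSG L s h0) t ≤ ε/2 :=
      Real.sSup_le hbound (by linarith)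
    have hK0 : 0 ≤ Kfun α (fun s => heatSG L s h0) t := by
      have hmem : wnorm α t (heatSG L t h0) ∈
          (fun s => wnorm α s (heatSG L s h0)) '' Set.Ioc 0 t :=
        ⟨t, ⟨ht', le_rfl⟩, rfl⟩
      have hw : 0 ≤ wnorm α t (heatSG L t h0) :=
        mul_nonneg (Real.rpow_nonneg ht'.le _) (Real.sqrt_nonneg _)
      exact hw.trans (le_csSup ⟨ε/2, fun x hx => hbound x hx⟩ hmem)
    rw [Real.dist_eq, sub_zero, abs_of_nonneg hK0]
    linarith
  · intro β hβ
    obtain ⟨hβ1, hβ2⟩ := hβ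
    have hc := csg_pos L hL
    refine ⟨(csg L) ^ (-((1+α-β)/4)), Real.rpow_pos_of_pos hc _, ?_⟩
    intro h0 hIn t ht
    have hH : 0 ≤ Hnorm β h0 := Real.sqrt_nonneg _
    apply Real.sSup_le
    · rintro x ⟨s, hs, rfl⟩
      have hs0 : (0:ℝ) < s := hs.1
      calc wnorm α s (heatSG L s h0)
          ≤ (csg L) ^ (-((1+α-β)/4)) * s ^ ((2*β-1)/8) * Hnorm β h0 :=
            wnorm_heat_le L hL α β (by linarith) (by linarith) (by linarith)
              h0 hIn.summable s hs0
        _ ≤ (csg L) ^ (-((1+α-β)/4)) * t ^ ((2*β-1)/8) * Hnorm β h0 := by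
            apply mul_le_mul_of_nonneg_right _ hH
            apply mul_le_mul_of_nonneg_left _ (Real.rpow_nonneg hc.le _)
            exact Real.rpow_le_rpow hs0.le hs.2 (by linarith)
        _ = (csg L) ^ (-((1+α-β)/4)) * t ^ ((2 * β - 1) / 8) * Hnorm β h0 := by norm_num
    · exact mul_nonneg (mul_nonneg (Real.rpow_nonneg hc.le _) (Real.rpow_nonneg ht.le _)) hH
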